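/- Fix n ≥ 1 and let ρ_GHZ := |GHZ_n⟩⟨GHZ_n| with |GHZ_n⟩ := (|0…0⟩ + |1…1⟩)/√2 ∈ (ℂ²)^{⊗n}. Then: (i) A_n(ρ_GHZ, ρ_GHZ) = (3^n + 2^n + 1)/2; (ii) B_{n,H}(ρ_GHZ, ρ_GHZ) = (5/8)(6/5)^n + (1/2)(4/5)^n + (3/4)(1/5)^n + (1/2)(−1/5)^n + (3/10)^n + (−3/10)^n; and (iii) A_n(ρ_GHZ, ρ_GHZ) · B_{n,H}(ρ_GHZ, ρ_GHZ) ≤ (18/5)^n. -/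

import Mathlib

open Matrix BigOperators
open scoped ComplexOrder

noncomputable section

abbrev QIdx (n : ℕ) := Fin n → Fin 2

def IsDensity {ι : Type*} [Fintype ι] [DecidableEq ι] (ρ : Matrix ι ι ℂ) : Prop :=
  ρ.PosSemidef ∧ ρ.trace = 1

/-- The operator on `(ℂ²)^{⊗k}` permuting the `k` tensor factors according to `π`. -/
def permOp {k : ℕ} (π : Equiv.Perm (Fin k)) : Matrix (Fin k → Fin 2) (Fin k → Fin 2) ℂ :=
  fun a b => if ∀ i, b i = a (π i) then 1 else 0

def pauliX : Matrix (Fin 2) (Fin 2) ℂ := !![0, 1; 1, 0]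
def pauliY : Matrix (Fin 2) (Fin 2) ℂ := !![0, -Complex.I; Complex.I, 0]
def pauliZ : Matrix (Fin 2) (Fin 2) ℂ := !![1, 0; 0, -1]

/-- `P^{⊗k}` on `(ℂ²)^{⊗k}`. -/
def pauliPow (k : ℕ) (P : Matrix (Fin 2) (Fin 2) ℂ) :
    Matrix (Fin k → Fin 2) (Fin k → Fin 2) ℂ :=
  fun a b => ∏ i, P (a i) (b i)

/-- The single-qubit Clifford fourth-moment operator `R_{4,Cl}` on `(ℂ²)^{⊗4}`. -/
def R4Cl : Matrix (Fin 4 → Fin 2) (Fin 4 → Fin 2) ℂ :=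
  -1 + ((1 : ℂ)/2) • (permOp (Equiv.swap 0 1) + permOp (Equiv.swap 2 3))
    + ((3 : ℂ)/4) • (1 + pauliPow 4 pauliX + pauliPow 4 pauliY + pauliPow 4 pauliZ)

/-- The single-qubit Haar fourth-moment operator `R_{4,H}` on `(ℂ²)^{⊗4}`. -/
def R4H : Matrix (Fin 4 → Fin 2) (Fin 4 → Fin 2) ℂ :=
  ((1 : ℂ)/5) • (1 + permOp (Equiv.swap 0 1) + permOp (Equiv.swap 2 3))
  + ((3 : ℂ)/5) • (permOp (Equiv.swap 0 1 * Equiv.swap 2 3)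
      + permOp (Equiv.swap 0 2 * Equiv.swap 1 3)
      + permOp (Equiv.swap 0 3 * Equiv.swap 1 2))
  - ((3 : ℂ)/10) • (permOp (Equiv.swap 0 2) + permOp (Equiv.swap 1 3)
      + permOp (Equiv.swap 0 3) + permOp (Equiv.swap 1 2))

/-- Per-qubit `n`-fold tensor power of an operator on `(ℂ²)^{⊗k}` (k replicas),
acting on `k` copies of `(ℂ²)^{⊗n}`. -/
def repPow (n : ℕ) {k : ℕ} (R : Matrix (Fin k → Fin 2) (Fin k → Fin 2) ℂ) :
    Matrix (Fin k → QIdx n) (Fin k → QIdx n) ℂ :=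
  fun a b => ∏ ℓ : Fin n, R (fun r => a r ℓ) (fun r => b r ℓ)

/-- The four-replica state `ρ ⊗ σ ⊗ ρ ⊗ σ`. -/
def rep4 {n : ℕ} (ρ σ : Matrix (QIdx n) (QIdx n) ℂ) :
    Matrix (Fin 4 → QIdx n) (Fin 4 → QIdx n) ℂ :=
  fun a b => ρ (a 0) (b 0) * σ (a 1) (b 1) * ρ (a 2) (b 2) * σ (a 3) (b 3)

/-- The pure state `|ψ⟩⟨ψ|`. -/
def pureState {ι : Type*} (ψ : ι → ℂ) : Matrix ι ι ℂ :=
  fun a b => ψ a * star (ψ b)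


/-- `ρ ⊗ σ` on `(ℂ²)^{⊗n} ⊗ (ℂ²)^{⊗n}`. -/
def kron2 {n : ℕ} (ρ σ : Matrix (QIdx n) (QIdx n) ℂ) :
    Matrix (QIdx n × QIdx n) (QIdx n × QIdx n) ℂ :=
  fun p q => ρ p.1 q.1 * σ p.2 q.2

/-- The partial swap `F_S` on `(ℂ²)^{⊗n} ⊗ (ℂ²)^{⊗n}`. -/
def partialSwap {n : ℕ} (S : Finset (Fin n)) :
    Matrix (QIdx n × QIdx n) (QIdx n × QIdx n) ℂ :=
  fun p q => if (∀ ℓ, if ℓ ∈ S then q.1 ℓ = p.2 ℓ ∧ q.2 ℓ = p.1 ℓ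
      else q.1 ℓ = p.1 ℓ ∧ q.2 ℓ = p.2 ℓ) then 1 else 0

/-- The second-moment coefficient `A_n(ρ,σ) = Σ_{S ⊆ [n]} 2^{n−|S|} tr[F_S(ρ⊗σ)]`. -/
def An {n : ℕ} (ρ σ : Matrix (QIdx n) (QIdx n) ℂ) : ℂ :=
  ∑ S : Finset (Fin n), (2 : ℂ)^(n - S.card) * Matrix.trace (partialSwap S * kron2 ρ σ)

/-- The Haar fourth-moment coefficient `B_{n,H}(ρ,σ) = tr[R_{4,H}^{⊗n}(ρ⊗σ⊗ρ⊗σ)]`. -/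
def BnH {n : ℕ} (ρ σ : Matrix (QIdx n) (QIdx n) ℂ) : ℂ :=
  Matrix.trace (repPow n R4H * rep4 ρ σ)

/-- The GHZ state `(|0…0⟩ + |1…1⟩)/√2` on `(ℂ²)^{⊗n}`. -/
def ghzVec (n : ℕ) : QIdx n → ℂ :=
  fun s => if s = (fun _ => 0) ∨ s = (fun _ => 1) then 1 / (Real.sqrt 2 : ℂ) else 0

/-- Integer-valued (times 10) version of `R4H`. -/
def val10 (u v : Fin 4 → Fin 2) : ℤ :=
    2 * (if u = v then 1 else 0)
  + 2 * (if ∀ i, v i = u (Equiv.swap 0 1 i) then 1 else 0)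
  + 2 * (if ∀ i, v i = u (Equiv.swap 2 3 i) then 1 else 0)
  + 6 * (if ∀ i, v i = u ((Equiv.swap 0 1 * Equiv.swap 2 3 : Equiv.Perm (Fin 4)) i) then 1 else 0)
  + 6 * (if ∀ i, v i = u ((Equiv.swap 0 2 * Equiv.swap 1 3 : Equiv.Perm (Fin 4)) i) then 1 else 0)
  + 6 * (if ∀ i, v i = u ((Equiv.swap 0 3 * Equiv.swap 1 2 : Equiv.Perm (Fin 4)) i) then 1 else 0)
  - 3 * (if ∀ i, v i = u (Equiv.swap 0 2 i) then 1 else 0)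
  - 3 * (if ∀ i, v i = u (Equiv.swap 1 3 i) then 1 else 0)
  - 3 * (if ∀ i, v i = u (Equiv.swap 0 3 i) then 1 else 0)
  - 3 * (if ∀ i, v i = u (Equiv.swap 1 2 i) then 1 else 0)

lemma cast_ite_int (P : Prop) [Decidable P] :
    ((if P then (1:ℤ) else 0 : ℤ) : ℂ) = if P then 1 else 0 := by
  split <;> simp

lemma R4H_eq (u v : Fin 4 → Fin 2) : R4H u v = (val10 u v : ℂ) / 10 := by
  simp only [R4H, Matrix.sub_apply, Matrix.add_apply, Matrix.smul_apply, Matrix.one_apply,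
    permOp, smul_eq_mul, val10]
  simp only [Int.cast_add, Int.cast_sub, Int.cast_mul, Int.cast_ofNat, cast_ite_int]
  ring

set_option maxRecDepth 100000 in
set_option maxHeartbeats 2000000 in
lemma sum_pow_val10 (n : ℕ) (hn : 1 ≤ n) :
    ∑ p : (Fin 4 → Fin 2) × (Fin 4 → Fin 2), ((val10 p.1 p.2 : ℂ))^n
    = 10*12^n + 8*8^n + 12*2^n + 8*(-2)^n + 16*3^n + 16*(-3)^n := by
  have h := Finset.sum_comp (s := (Finset.univ : Finset ((Fin 4 → Fin 2) × (Fin 4 → Fin 2))))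
    (fun z : ℤ => ((z : ℂ))^n) (fun p => val10 p.1 p.2)
  rw [h]
  have himg : (Finset.univ.image (fun p : ((Fin 4 → Fin 2) × (Fin 4 → Fin 2)) => val10 p.1 p.2))
      = ({12, 8, 2, -2, 3, -3, 0} : Finset ℤ) := by decide
  rw [himg]
  have c1 : (Finset.univ.filter (fun p : ((Fin 4 → Fin 2) × (Fin 4 → Fin 2)) => val10 p.1 p.2 = 12)).card = 10 := by decide
  have c2 : (Finset.univ.filter (fun p : ((Fin 4 → Fin 2) × (Fin 4 → Fin 2)) => val10 p.1 p.2 = 8)).card = 8 := by decide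
  have c3 : (Finset.univ.filter (fun p : ((Fin 4 → Fin 2) × (Fin 4 → Fin 2)) => val10 p.1 p.2 = 2)).card = 12 := by decide
  have c4 : (Finset.univ.filter (fun p : ((Fin 4 → Fin 2) × (Fin 4 → Fin 2)) => val10 p.1 p.2 = -2)).card = 8 := by decide
  have c5 : (Finset.univ.filter (fun p : ((Fin 4 → Fin 2) × (Fin 4 → Fin 2)) => val10 p.1 p.2 = 3)).card = 16 := by decide
  have c6 : (Finset.univ.filter (fun p : ((Fin 4 → Fin 2) × (Fin 4 → Fin 2)) => val10 p.1 p.2 = -3)).card = 16 := by decide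
  rw [show ({12, 8, 2, -2, 3, -3, 0} : Finset ℤ) = insert 12 (insert 8 (insert 2 (insert (-2) (insert 3 (insert (-3) ({0} : Finset ℤ)))))) from rfl]
  rw [Finset.sum_insert (by decide), Finset.sum_insert (by decide), Finset.sum_insert (by decide),
    Finset.sum_insert (by decide), Finset.sum_insert (by decide), Finset.sum_insert (by decide),
    Finset.sum_singleton]
  rw [c1, c2, c3, c4, c5, c6]
  have hz : ((0:ℤ):ℂ)^n = 0 := by
    simp [zero_pow (by omega : n ≠ 0)]
  rw [hz]
  push_cast
  ring

lemma ghz_eq_zero {n : ℕ} {s : QIdx n} (h0 : s ≠ (fun _ => 0)) (h1 : s ≠ (fun _ => 1)) :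
    ghzVec n s = 0 := by
  simp [ghzVec, h0, h1]

lemma ghz_const {n : ℕ} (x : Fin 2) : ghzVec n (fun _ => x) = 1 / (Real.sqrt 2 : ℂ) := by
  fin_cases x <;> simp [ghzVec]

lemma pure_ghz_const {n : ℕ} (x y : Fin 2) :
    pureState (ghzVec n) (fun _ => x) (fun _ => y) = 1/2 := by
  rw [pureState, ghz_const, ghz_const]
  have h2 : ((Real.sqrt 2 : ℝ) : ℂ) * ((Real.sqrt 2 : ℝ) : ℂ) = 2 := by
    rw [← Complex.ofReal_mul, Real.mul_self_sqrt (by norm_num)]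
    norm_num
  have hs : star ((1:ℂ) / (Real.sqrt 2 : ℂ)) = (1:ℂ) / (Real.sqrt 2 : ℂ) := by
    rw [star_div₀]
    simp [Complex.star_def, Complex.conj_ofReal]
  rw [hs, div_mul_div_comm, one_mul, h2]

lemma pure_ghz_zero_right {n : ℕ} (a : QIdx n) {b : QIdx n}
    (h0 : b ≠ (fun _ => 0)) (h1 : b ≠ (fun _ => 1)) :
    pureState (ghzVec n) a b = 0 := by
  rw [pureState, ghz_eq_zero h0 h1]
  simp

lemma pure_ghz_zero_left {n : ℕ} {a : QIdx n} (b : QIdx n)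
    (h0 : a ≠ (fun _ => 0)) (h1 : a ≠ (fun _ => 1)) :
    pureState (ghzVec n) a b = 0 := by
  rw [pureState, ghz_eq_zero h0 h1]
  simp

lemma const_ne {n : ℕ} (hn : 1 ≤ n) : (fun _ => (0:Fin 2)) ≠ (fun _ : Fin n => (1:Fin 2)) := by
  intro hc
  have := congrFun hc ⟨0, hn⟩
  simp at this

lemma sum_support {n : ℕ} (hn : 1 ≤ n) (f : QIdx n → ℂ)
    (h : ∀ s, s ≠ (fun _ => 0) → s ≠ (fun _ => 1) → f s = 0) :
    ∑ s, f s = f (fun _ => 0) + f (fun _ => 1) := by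
  rw [← Finset.sum_subset (Finset.subset_univ ({(fun _ => 0), (fun _ => 1)} : Finset (QIdx n)))
    (fun x _ hx => by
      simp only [Finset.mem_insert, Finset.mem_singleton, not_or] at hx
      exact h x hx.1 hx.2)]
  exact Finset.sum_pair (const_ne hn)

lemma trace_partialSwap {n : ℕ} (S : Finset (Fin n)) (ρ σ : Matrix (QIdx n) (QIdx n) ℂ) :
    Matrix.trace (partialSwap S * kron2 ρ σ) =
    ∑ p : QIdx n × QIdx n, ρ (S.piecewise p.2 p.1) p.1 * σ (S.piecewise p.1 p.2) p.2 := by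
  simp only [Matrix.trace, Matrix.diag, Matrix.mul_apply, partialSwap, kron2]
  refine Finset.sum_congr rfl fun p _ => ?_
  have hiff : ∀ q : QIdx n × QIdx n,
      (∀ ℓ, if ℓ ∈ S then q.1 ℓ = p.2 ℓ ∧ q.2 ℓ = p.1 ℓ else q.1 ℓ = p.1 ℓ ∧ q.2 ℓ = p.2 ℓ)
      ↔ q = (S.piecewise p.2 p.1, S.piecewise p.1 p.2) := by
    intro q
    constructor
    · intro h
      have h1 : q.1 = S.piecewise p.2 p.1 := by
        funext ℓ
        have := h ℓ
        by_cases hl : ℓ ∈ S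
        · simp only [hl, if_true] at this
          rw [Finset.piecewise_eq_of_mem _ _ _ hl]; exact this.1
        · simp only [hl, if_false] at this
          rw [Finset.piecewise_eq_of_notMem _ _ _ hl]; exact this.1
      have h2 : q.2 = S.piecewise p.1 p.2 := by
        funext ℓ
        have := h ℓ
        by_cases hl : ℓ ∈ S
        · simp only [hl, if_true] at this
          rw [Finset.piecewise_eq_of_mem _ _ _ hl]; exact this.2
        · simp only [hl, if_false] at this
          rw [Finset.piecewise_eq_of_notMem _ _ _ hl]; exact this.2
      exact Prod.ext h1 h2
    · rintro rfl ℓ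
      by_cases hl : ℓ ∈ S <;>
        simp [hl, Finset.piecewise_eq_of_mem _ _ _ , Finset.piecewise_eq_of_notMem]
  simp_rw [hiff, ite_mul, one_mul, zero_mul, Finset.sum_ite_eq', Finset.mem_univ, if_true]

lemma sum_two_pow {n : ℕ} : ∑ S : Finset (Fin n), (2:ℂ)^(n - S.card) = 3^n := by
  have h := Finset.prod_add (fun _ : Fin n => (1:ℂ)) (fun _ : Fin n => (2:ℂ)) Finset.univ
  simp only [Finset.prod_const_one, one_mul, Finset.prod_const, Finset.powerset_univ] at h
  have hc : ∀ S : Finset (Fin n), (Finset.univ \ S).card = n - S.card := fun S => by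
    rw [← Finset.compl_eq_univ_sdiff, Finset.card_compl, Fintype.card_fin]
  rw [show (∑ S : Finset (Fin n), (2:ℂ)^(n - S.card))
      = ∑ S : Finset (Fin n), (2:ℂ)^((Finset.univ \ S).card) from
    Finset.sum_congr rfl (fun S _ => by rw [hc])]
  rw [← h, Finset.card_univ, Fintype.card_fin]
  norm_num

lemma trace_ghz_swap {n : ℕ} (hn : 1 ≤ n) (S : Finset (Fin n)) :
    Matrix.trace (partialSwap S * kron2 (pureState (ghzVec n)) (pureState (ghzVec n)))
    = if S = ∅ ∨ S = Finset.univ then 1 else 1/2 := by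
  rw [trace_partialSwap, Fintype.sum_prod_type]
  rw [sum_support hn _ (fun s h0 h1 => Finset.sum_eq_zero
    (fun p2 _ => mul_eq_zero_of_left (pure_ghz_zero_right _ h0 h1) _))]
  rw [sum_support hn _ (fun s h0 h1 => mul_eq_zero_of_right _ (pure_ghz_zero_right _ h0 h1)),
      sum_support hn _ (fun s h0 h1 => mul_eq_zero_of_right _ (pure_ghz_zero_right _ h0 h1))]
  simp only []
  by_cases hS0 : S = ∅
  · subst hS0
    simp only [Finset.piecewise_empty, pure_ghz_const]
    norm_num
  by_cases hS1 : S = Finset.univ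
  · subst hS1
    simp only [Finset.piecewise_univ, pure_ghz_const]
    norm_num
  · rw [if_neg (by tauto)]
    obtain ⟨i, hi⟩ := Finset.nonempty_iff_ne_empty.mpr hS0
    obtain ⟨j, hj⟩ : ∃ j, j ∉ S := by
      by_contra hc
      push_neg at hc
      exact hS1 (Finset.eq_univ_iff_forall.mpr hc)
    have hmix : ∀ x y : Fin 2, x ≠ y →
        pureState (ghzVec n) (S.piecewise (fun _ => y) (fun _ => x)) (fun _ => x) = 0 := by
      intro x y hxy
      apply pure_ghz_zero_left
      · intro hc
        have h1 := congrFun hc i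
        have h2 := congrFun hc j
        rw [Finset.piecewise_eq_of_mem _ _ _ hi] at h1
        rw [Finset.piecewise_eq_of_notMem _ _ _ hj] at h2
        exact hxy (h2.trans h1.symm)
      · intro hc
        have h1 := congrFun hc i
        have h2 := congrFun hc j
        rw [Finset.piecewise_eq_of_mem _ _ _ hi] at h1
        rw [Finset.piecewise_eq_of_notMem _ _ _ hj] at h2
        exact hxy (h2.trans h1.symm)
    have hsame : ∀ f : QIdx n, S.piecewise f f = f := fun f => by
      funext ℓ; by_cases hl : ℓ ∈ S <;>
        simp [Finset.piecewise_eq_of_mem, Finset.piecewise_eq_of_notMem, hl]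
    rw [hmix 0 1 (by decide), hmix 1 0 (by decide)]
    rw [hsame, hsame]
    simp only [pure_ghz_const]
    norm_num

lemma An_ghz {n : ℕ} (hn : 1 ≤ n) :
    An (pureState (ghzVec n)) (pureState (ghzVec n)) = ((3:ℂ)^n + 2^n + 1)/2 := by
  unfold An
  have hrw : ∀ S : Finset (Fin n), (2:ℂ)^(n - S.card) *
      Matrix.trace (partialSwap S * kron2 (pureState (ghzVec n)) (pureState (ghzVec n)))
      = (2:ℂ)^(n - S.card) * (1/2)
        + ((if S = ∅ then (2:ℂ)^(n - S.card) * (1/2) else 0)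
        + (if S = Finset.univ then (2:ℂ)^(n - S.card) * (1/2) else 0)) := by
    intro S
    rw [trace_ghz_swap hn S]
    have hne : ¬ (S = ∅ ∧ S = Finset.univ) := by
      rintro ⟨rfl, hc⟩
      have : (⟨0, hn⟩ : Fin n) ∈ (∅ : Finset (Fin n)) := by
        rw [hc]; exact Finset.mem_univ _
      simp at this
    split_ifs with h h1 h2 h3 h4 <;> first
      | (exfalso; tauto)
      | ring
  rw [Finset.sum_congr rfl fun S _ => hrw S]
  rw [Finset.sum_add_distrib, Finset.sum_add_distrib, ← Finset.sum_mul, sum_two_pow,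
    Finset.sum_ite_eq' Finset.univ (∅ : Finset (Fin n)),
    Finset.sum_ite_eq' Finset.univ (Finset.univ : Finset (Fin n))]
  simp only [Finset.mem_univ, if_true, Finset.card_empty, Finset.card_univ, Fintype.card_fin,
    Nat.sub_zero, Nat.sub_self, pow_zero]
  ring

lemma sum_restrict4 {n : ℕ} (hn : 1 ≤ n) (F : (Fin 4 → QIdx n) → ℂ)
    (h : ∀ a, (∃ r, a r ≠ (fun _ => 0) ∧ a r ≠ (fun _ => 1)) → F a = 0) :
    ∑ a : Fin 4 → QIdx n, F a = ∑ u : Fin 4 → Fin 2, F (fun r _ => u r) := by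
  have hinj : ∀ u ∈ (Finset.univ : Finset (Fin 4 → Fin 2)), ∀ u' ∈ Finset.univ,
      (fun r (_ : Fin n) => u r) = (fun r _ => u' r) → u = u' := by
    intro u _ u' _ huu
    funext r
    exact congrFun (congrFun huu r) ⟨0, hn⟩
  rw [← Finset.sum_image hinj]
  refine (Finset.sum_subset (Finset.subset_univ _) ?_).symm
  intro a _ ha
  apply h
  by_contra hc
  push_neg at hc
  apply ha
  rw [Finset.mem_image]
  refine ⟨fun r => if a r = (fun _ => 0) then 0 else 1, Finset.mem_univ _, ?_⟩
  funext r ℓ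
  show (if a r = (fun _ => 0) then (0 : Fin 2) else 1) = a r ℓ
  by_cases h0 : a r = (fun _ => 0)
  · rw [if_pos h0]
    exact (congrFun h0 ℓ).symm
  · rw [if_neg h0]
    exact (congrFun (hc r h0) ℓ).symm

lemma rep4_zero {n : ℕ} (ρ : Matrix (QIdx n) (QIdx n) ℂ) {a b : Fin 4 → QIdx n} (P : ℂ)
    (r : Fin 4) (h : ρ (b r) (a r) = 0) :
    P * (ρ (b 0) (a 0) * ρ (b 1) (a 1) * ρ (b 2) (a 2) * ρ (b 3) (a 3)) = 0 := by
  fin_cases r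
  · rw [show ρ (b 0) (a 0) = 0 from h]; ring
  · rw [show ρ (b 1) (a 1) = 0 from h]; ring
  · rw [show ρ (b 2) (a 2) = 0 from h]; ring
  · rw [show ρ (b 3) (a 3) = 0 from h]; ring

lemma sum_restrict4' {n : ℕ} (hn : 1 ≤ n) (F : (Fin 4 → QIdx n) → (Fin 4 → QIdx n) → ℂ)
    (h1 : ∀ a b, (∃ r, a r ≠ (fun _ => 0) ∧ a r ≠ (fun _ => 1)) → F a b = 0)
    (h2 : ∀ a b, (∃ r, b r ≠ (fun _ => 0) ∧ b r ≠ (fun _ => 1)) → F a b = 0) :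
    ∑ a : Fin 4 → QIdx n, ∑ b : Fin 4 → QIdx n, F a b
      = ∑ u : Fin 4 → Fin 2, ∑ v : Fin 4 → Fin 2, F (fun r _ => u r) (fun r _ => v r) := by
  rw [sum_restrict4 hn (fun a => ∑ b, F a b)
    (fun a ha => Finset.sum_eq_zero fun b _ => h1 a b ha)]
  exact Finset.sum_congr rfl fun u _ =>
    sum_restrict4 hn (fun b => F _ b) (fun b hb => h2 _ b hb)

lemma BnH_ghz {n : ℕ} (hn : 1 ≤ n) :
    BnH (pureState (ghzVec n)) (pureState (ghzVec n))
      = ((5 : ℂ)/8) * ((6 : ℂ)/5)^n + ((1 : ℂ)/2) * ((4 : ℂ)/5)^n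
        + ((3 : ℂ)/4) * ((1 : ℂ)/5)^n + ((1 : ℂ)/2) * (-(1 : ℂ)/5)^n
        + ((3 : ℂ)/10)^n + (-(3 : ℂ)/10)^n := by
  unfold BnH
  simp only [Matrix.trace, Matrix.diag, Matrix.mul_apply, repPow, rep4]
  rw [sum_restrict4' hn
    (fun a b => (∏ ℓ : Fin n, R4H (fun r => a r ℓ) fun r => b r ℓ) *
      (pureState (ghzVec n) (b 0) (a 0) * pureState (ghzVec n) (b 1) (a 1) *
        pureState (ghzVec n) (b 2) (a 2) * pureState (ghzVec n) (b 3) (a 3)))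
    (fun a b ⟨r, h0, h1⟩ => rep4_zero _ _ r (pure_ghz_zero_right _ h0 h1))
    (fun a b ⟨r, h0, h1⟩ => rep4_zero _ _ r (pure_ghz_zero_left _ h0 h1))]
  simp only [pure_ghz_const, Finset.prod_const, Finset.card_univ, Fintype.card_fin, R4H_eq]
  have hstep : ∀ u v : Fin 4 → Fin 2,
      ((val10 u v : ℂ)/10)^n * (1/2 * (1/2) * (1/2) * (1/2))
      = ((val10 u v : ℂ))^n * (1/(16 * 10^n)) := by
    intro u v
    rw [div_pow]
    ring
  rw [Finset.sum_congr rfl (fun u (_ : u ∈ Finset.univ) =>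
    Finset.sum_congr rfl (fun v (_ : v ∈ Finset.univ) => hstep u v))]
  simp_rw [← Finset.sum_mul]
  have h2 := sum_pow_val10 n hn
  rw [Fintype.sum_prod_type] at h2
  simp only [] at h2
  rw [h2]
  have h10 : (10:ℂ)^n ≠ 0 := pow_ne_zero _ (by norm_num)
  rw [show ((6:ℂ)/5) = 12/10 by norm_num, show ((4:ℂ)/5) = 8/10 by norm_num,
    show ((1:ℂ)/5) = 2/10 by norm_num, show (-(1:ℂ)/5) = -2/10 by norm_num,
    show (-(3:ℂ)/10) = -3/10 by norm_num, div_pow, div_pow, div_pow, div_pow, div_pow]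
  have h3 : (-3/10:ℂ)^n * 10^n = (-3)^n := by rw [← mul_pow]; norm_num
  field_simp
  linear_combination (-1024 : ℂ) * h3

lemma core_ineq (n : ℕ) (hn : 1 ≤ n) :
    ((3:ℝ)^n + 2^n + 1) * (5*12^n + 4*8^n + 6*2^n + 4*(-2:ℝ)^n + 8*3^n + 8*(-3:ℝ)^n)
      ≤ 16 * 36^n := by
  rcases lt_or_ge n 6 with h6 | h6
  · interval_cases n <;> norm_num
  · have habs2 : (-2:ℝ)^n ≤ 2^n := by
      calc (-2:ℝ)^n ≤ |(-2:ℝ)^n| := le_abs_self _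
        _ = 2^n := by rw [abs_pow]; norm_num
    have habs3 : (-3:ℝ)^n ≤ 3^n := by
      calc (-3:ℝ)^n ≤ |(-3:ℝ)^n| := le_abs_self _
        _ = 3^n := by rw [abs_pow]; norm_num
    have hA : (0:ℝ) ≤ (3:ℝ)^n + 2^n + 1 := by positivity
    have step1 : ((3:ℝ)^n + 2^n + 1) * (5*12^n + 4*8^n + 6*2^n + 4*(-2:ℝ)^n + 8*3^n + 8*(-3:ℝ)^n)
        ≤ ((3:ℝ)^n + 2^n + 1) * (5*12^n + 4*8^n + 10*2^n + 16*3^n) :=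
      mul_le_mul_of_nonneg_left (by linarith) hA
    refine step1.trans ?_
    have e1 : (3:ℝ)^n * 12^n = 36^n := by rw [← mul_pow]; norm_num
    have e2 : (3:ℝ)^n * 8^n = 24^n := by rw [← mul_pow]; norm_num
    have e3 : (3:ℝ)^n * 2^n = 6^n := by rw [← mul_pow]; norm_num
    have e4 : (3:ℝ)^n * 3^n = 9^n := by rw [← mul_pow]; norm_num
    have e5 : (2:ℝ)^n * 12^n = 24^n := by rw [← mul_pow]; norm_num
    have e6 : (2:ℝ)^n * 8^n = 16^n := by rw [← mul_pow]; norm_num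
    have e7 : (2:ℝ)^n * 2^n = 4^n := by rw [← mul_pow]; norm_num
    have e8 : (2:ℝ)^n * 3^n = 6^n := by rw [← mul_pow]; norm_num
    have b : ∀ a : ℝ, 0 ≤ a → a ≤ 24 → a^n ≤ (24:ℝ)^n := fun a h1 h2 => pow_le_pow_left₀ h1 h2 n
    have h24 : 100 * (24:ℝ)^n ≤ 11 * 36^n := by
      have h32 : (729/64 : ℝ) ≤ (3/2:ℝ)^n := by
        calc (729/64:ℝ) = (3/2)^6 := by norm_num
          _ ≤ (3/2)^n := pow_le_pow_right₀ (by norm_num) h6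
      have h36 : (36:ℝ)^n = 24^n * (3/2)^n := by rw [← mul_pow]; norm_num
      have hp : (0:ℝ) < 24^n := by positivity
      nlinarith
    calc ((3:ℝ)^n + 2^n + 1) * (5*12^n + 4*8^n + 10*2^n + 16*3^n)
        = 5*36^n + 9*24^n + 16*9^n + 4*16^n + 5*12^n + 26*6^n + 4*8^n + 10*4^n
            + 16*3^n + 10*2^n := by
          linear_combination 5*e1 + 4*e2 + 10*e3 + 16*e4 + 5*e5 + 4*e6 + 10*e7 + 16*e8
      _ ≤ 16 * 36^n := by
          have b9 := b 9 (by norm_num) (by norm_num)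
          have b16 := b 16 (by norm_num) (by norm_num)
          have b12 := b 12 (by norm_num) (by norm_num)
          have b6 := b 6 (by norm_num) (by norm_num)
          have b8 := b 8 (by norm_num) (by norm_num)
          have b4 := b 4 (by norm_num) (by norm_num)
          have b3 := b 3 (by norm_num) (by norm_num)
          have b2 := b 2 (by norm_num) (by norm_num)
          linarith

lemma real_ineq (n : ℕ) (hn : 1 ≤ n) :
    ((3:ℝ)^n + 2^n + 1)/2 * ((5:ℝ)/8*((6:ℝ)/5)^n + 1/2*((4:ℝ)/5)^n + 3/4*((1:ℝ)/5)^n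
      + 1/2*(-(1:ℝ)/5)^n + ((3:ℝ)/10)^n + (-(3:ℝ)/10)^n) ≤ ((18:ℝ)/5)^n := by
  have h10 : (0:ℝ) < 16 * 10^n := by positivity
  rw [← mul_le_mul_iff_of_pos_right h10]
  have p1 : ((6:ℝ)/5)^n * 10^n = 12^n := by rw [← mul_pow]; norm_num
  have p2 : ((4:ℝ)/5)^n * 10^n = 8^n := by rw [← mul_pow]; norm_num
  have p3 : ((1:ℝ)/5)^n * 10^n = 2^n := by rw [← mul_pow]; norm_num
  have p4 : (-(1:ℝ)/5)^n * 10^n = (-2:ℝ)^n := by rw [← mul_pow]; norm_num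
  have p5 : ((3:ℝ)/10)^n * 10^n = 3^n := by rw [← mul_pow]; norm_num
  have p6 : (-(3:ℝ)/10)^n * 10^n = (-3:ℝ)^n := by rw [← mul_pow]; norm_num
  have p7 : ((18:ℝ)/5)^n * 10^n = 36^n := by rw [← mul_pow]; norm_num
  calc ((3:ℝ)^n + 2^n + 1)/2 * ((5:ℝ)/8*((6:ℝ)/5)^n + 1/2*((4:ℝ)/5)^n + 3/4*((1:ℝ)/5)^n
        + 1/2*(-(1:ℝ)/5)^n + ((3:ℝ)/10)^n + (-(3:ℝ)/10)^n) * (16 * 10^n)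
      = ((3:ℝ)^n + 2^n + 1) * (5*12^n + 4*8^n + 6*2^n + 4*(-2:ℝ)^n + 8*3^n + 8*(-3:ℝ)^n) := by
        linear_combination ((3:ℝ)^n + 2^n + 1) * (5*p1 + 4*p2 + 6*p3 + 4*p4 + 8*p5 + 8*p6)
    _ ≤ 16 * 36^n := core_ineq n hn
    _ = ((18:ℝ)/5)^n * (16 * 10^n) := by linear_combination (-16 : ℝ)*p7
/-- For the GHZ state: (i) `A_n = (3^n + 2^n + 1)/2`;
(ii) `B_{n,H} = (5/8)(6/5)^n + (1/2)(4/5)^n + (3/4)(1/5)^n + (1/2)(−1/5)^n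
 + (3/10)^n + (−3/10)^n`; (iii) `A_n · B_{n,H} ≤ (18/5)^n`. -/
theorem ghz_certificate (n : ℕ) (hn : 1 ≤ n) :
    An (pureState (ghzVec n)) (pureState (ghzVec n))
      = ((3 : ℂ)^n + 2^n + 1)/2 ∧
    BnH (pureState (ghzVec n)) (pureState (ghzVec n))
      = ((5 : ℂ)/8) * ((6 : ℂ)/5)^n + ((1 : ℂ)/2) * ((4 : ℂ)/5)^n
        + ((3 : ℂ)/4) * ((1 : ℂ)/5)^n + ((1 : ℂ)/2) * (-(1 : ℂ)/5)^n
        + ((3 : ℂ)/10)^n + (-(3 : ℂ)/10)^n ∧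
    An (pureState (ghzVec n)) (pureState (ghzVec n))
        * BnH (pureState (ghzVec n)) (pureState (ghzVec n))
      ≤ ((18 : ℂ)/5)^n := by
  refine ⟨An_ghz hn, BnH_ghz hn, ?_⟩
  rw [An_ghz hn, BnH_ghz hn]
  have hL : ((3 : ℂ)^n + 2^n + 1)/2 * (((5 : ℂ)/8) * ((6 : ℂ)/5)^n + ((1 : ℂ)/2) * ((4 : ℂ)/5)^n
        + ((3 : ℂ)/4) * ((1 : ℂ)/5)^n + ((1 : ℂ)/2) * (-(1 : ℂ)/5)^n
        + ((3 : ℂ)/10)^n + (-(3 : ℂ)/10)^n)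
      = ((((3:ℝ)^n + 2^n + 1)/2 * ((5:ℝ)/8*((6:ℝ)/5)^n + 1/2*((4:ℝ)/5)^n + 3/4*((1:ℝ)/5)^n
        + 1/2*(-(1:ℝ)/5)^n + ((3:ℝ)/10)^n + (-(3:ℝ)/10)^n) : ℝ) : ℂ) := by
    push_cast
    ring
  have hR : ((18 : ℂ)/5)^n = ((((18:ℝ)/5)^n : ℝ) : ℂ) := by
    push_cast
    ring
  rw [hL, hR, Complex.real_le_real]
  exact real_ineq n hn
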